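/- Let V be invertible lower triangular supported on a sparsity pattern S^q, and let ℓ ∈ ℝ^n be supported on S^p_i ⊆ {i,…,n}. If A ⊆ {i,…,n} is any superset of S^p_i closed under the DAG of S^q (i.e., j ∈ A and (k,j) ∈ S^q, k > j implies k ∈ A), then (V⁻¹ℓ)_j = 0 for all j ∉ A. -/
import Mathlib


open Matrix

/-- Let `V` be invertible lower triangular supported on a sparsity pattern `Sq`,
and `ℓ` supported on `Spi ⊆ {i,…,n}`. If `A ⊆ {i,…,n}` is any superset of `Spi`
closed under the DAG of `Sq` (i.e., `j ∈ A`, `(k,j) ∈ Sq`, `k > j` implies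
`k ∈ A`), then `(V⁻¹ℓ)_j = 0` for all `j ∉ A`. -/
theorem sparse_triangular_solve_support
    {n : ℕ} (V : Matrix (Fin n) (Fin n) ℝ) (hV : IsUnit V.det)
    (hVlt : ∀ j k : Fin n, j < k → V j k = 0)
    (Sq : Set (Fin n × Fin n))
    (hlower : ∀ p ∈ Sq, p.2 ≤ p.1)
    (hdiag : ∀ j : Fin n, (j, j) ∈ Sq)
    (hVsupp : ∀ k j : Fin n, V k j ≠ 0 → (k, j) ∈ Sq)
    (i : Fin n) (Spi : Set (Fin n)) (hSpi : ∀ j ∈ Spi, i ≤ j)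
    (l : Fin n → ℝ) (hl : ∀ j : Fin n, l j ≠ 0 → j ∈ Spi)
    (A : Set (Fin n)) (hAi : ∀ j ∈ A, i ≤ j) (hSpA : Spi ⊆ A)
    (hclosed : ∀ j ∈ A, ∀ k : Fin n, (k, j) ∈ Sq → j < k → k ∈ A) :
    ∀ j : Fin n, j ∉ A → (V⁻¹.mulVec l) j = 0 := by
  set x : Fin n → ℝ := V⁻¹.mulVec l with hx
  have hVx : V.mulVec x = l := by
    rw [hx, mulVec_mulVec, Matrix.mul_nonsing_inv V hV, one_mulVec]
  -- diagonal entries are nonzero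
  have hdiagne : ∀ j : Fin n, V j j ≠ 0 := by
    intro j hj0
    have hdet : V.det = ∏ k, V k k := Matrix.det_of_lowerTriangular V hVlt
    have : V.det = 0 := by
      rw [hdet]
      exact Finset.prod_eq_zero (Finset.mem_univ j) hj0
    exact hV.ne_zero (by simpa using this)
  suffices key : ∀ m : ℕ, ∀ j : Fin n, j.val < m → j ∉ A → x j = 0 by
    intro j hj
    exact key (j.val + 1) j (Nat.lt_succ_self _) hj
  intro m
  induction m with
  | zero => intro j hj; omega
  | succ m IH =>
    intro j hjm hjA
    have hlj : l j = 0 := by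
      by_contra h
      exact hjA (hSpA (hl j h))
    have hrow : ∑ k, V j k * x k = 0 := by
      have := congrFun hVx j
      simpa [Matrix.mulVec, dotProduct, hlj] using this
    have hsplit : ∑ k, V j k * x k = V j j * x j := by
      rw [Finset.sum_eq_single j]
      · intro k _ hkj
        rcases lt_or_gt_of_ne (Fin.val_ne_iff.mpr hkj) with hk | hk
        · -- k < j
          by_cases hV0 : V j k = 0
          · simp [hV0]
          · have hkS : (j, k) ∈ Sq := hVsupp j k hV0
            have hkA : k ∉ A := fun hkA => hjA (hclosed k hkA j hkS hk)
            have hkm : k.val < m := by omega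
            have := IH k hkm hkA
            simp [this]
        · simp [hVlt j k hk]
      · intro h; exact absurd (Finset.mem_univ j) h
    have : V j j * x j = 0 := hsplit ▸ hrow
    have := mul_eq_zero.mp this
    tauto
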